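/- For any propositional formula F and any HT-interpretation (X,Y) (i.e., X ⊆ Y), the HT-interpretation (X,Y) satisfies F in the logic of here-and-there if and only if X classically satisfies the reduct F^Y. -/

import Mathlib

inductive PForm (α : Type) : Type where
  | bot : PForm α
  | atom : α → PForm α
  | and : PForm α → PForm α → PForm α
  | or : PForm α → PForm α → PForm α
  | imp : PForm α → PForm α → PForm α

namespace PForm

variable {α : Type}

def top : PForm α := imp bot bot

def neg (F : PForm α) : PForm α := imp F bot

def sat (X : Set α) : PForm α → Prop
  | bot => False
  | atom a => a ∈ X
  | and F G => sat X F ∧ sat X G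
  | or F G => sat X F ∨ sat X G
  | imp F G => sat X F → sat X G

open Classical in
noncomputable def reduct (X : Set α) : PForm α → PForm α
  | bot => bot
  | atom a => if a ∈ X then atom a else bot
  | and F G => if sat X (and F G) then and (reduct X F) (reduct X G) else bot
  | or F G => if sat X (or F G) then or (reduct X F) (reduct X G) else bot
  | imp F G => if sat X (imp F G) then imp (reduct X F) (reduct X G) else bot

def headAtoms : PForm α → Set α
  | bot => ∅
  | atom a => {a}
  | and F G => headAtoms F ∪ headAtoms G
  | or F G => headAtoms F ∪ headAtoms G
  | imp _ G => headAtoms G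

def atomsOf : PForm α → Set α
  | bot => ∅
  | atom a => {a}
  | and F G => atomsOf F ∪ atomsOf G
  | or F G => atomsOf F ∪ atomsOf G
  | imp F G => atomsOf F ∪ atomsOf G

def htSat (X Y : Set α) : PForm α → Prop
  | bot => False
  | atom a => a ∈ X
  | and F G => htSat X Y F ∧ htSat X Y G
  | or F G => htSat X Y F ∨ htSat X Y G
  | imp F G => (htSat X Y F → htSat X Y G) ∧ sat Y (imp F G)

end PForm

variable {α : Type}

/-- Satisfaction of a theory (set of formulas). -/
def satTh (X : Set α) (Γ : Set (PForm α)) : Prop := ∀ F ∈ Γ, PForm.sat X F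

/-- The reduct of a theory relative to X. -/
noncomputable def reductTh (X : Set α) (Γ : Set (PForm α)) : Set (PForm α) :=
  PForm.reduct X '' Γ

/-- X is a stable model of Γ iff X is a minimal set satisfying Γ^X. -/
def StableModel (Γ : Set (PForm α)) (X : Set α) : Prop :=
  satTh X (reductTh X Γ) ∧ ∀ Y : Set α, Y ⊂ X → ¬ satTh Y (reductTh X Γ)

def htSatTh (X Y : Set α) (Γ : Set (PForm α)) : Prop := ∀ F ∈ Γ, PForm.htSat X Y F

def theoryHeadAtoms (Γ : Set (PForm α)) : Set α := ⋃ F ∈ Γ, PForm.headAtoms F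


theorem htSat_sat {F : PForm α} {X Y : Set α} (hXY : X ⊆ Y) :
    PForm.htSat X Y F → PForm.sat Y F := by
  induction F with
  | bot => exact id
  | atom a => exact fun h => hXY h
  | and F G ihF ihG => exact fun h => ⟨ihF h.1, ihG h.2⟩
  | or F G ihF ihG => exact fun h => h.elim (fun h => Or.inl (ihF h)) (fun h => Or.inr (ihG h))
  | imp F G ihF ihG => exact fun h => h.2

/-- (X,Y) ⊨ F in here-and-there iff X ⊨ F^Y. -/
theorem stmt2 (F : PForm α) (X Y : Set α) (hXY : X ⊆ Y) :
    PForm.htSat X Y F ↔ PForm.sat X (PForm.reduct Y F) := by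
  induction F with
  | bot => simp [PForm.htSat, PForm.reduct, PForm.sat]
  | atom a =>
    simp only [PForm.htSat, PForm.reduct]
    by_cases h : a ∈ Y
    · simp [h, PForm.sat]
    · simp [h, PForm.sat]; exact fun hx => h (hXY hx)
  | and F G ihF ihG =>
    simp only [PForm.htSat, PForm.reduct, PForm.sat]
    by_cases h : PForm.sat Y F ∧ PForm.sat Y G
    · erw [@if_pos _ (Classical.propDecidable _) h]; simp [PForm.sat, ihF, ihG]
    · erw [@if_neg _ (Classical.propDecidable _) h]; simp only [PForm.sat, iff_false]
      exact fun hc => h ⟨htSat_sat hXY hc.1, htSat_sat hXY hc.2⟩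
  | or F G ihF ihG =>
    simp only [PForm.htSat, PForm.reduct, PForm.sat]
    by_cases h : PForm.sat Y F ∨ PForm.sat Y G
    · erw [@if_pos _ (Classical.propDecidable _) h]; simp [PForm.sat, ihF, ihG]
    · erw [@if_neg _ (Classical.propDecidable _) h]; simp only [PForm.sat, iff_false]
      exact fun hc => h (hc.elim (fun hc => Or.inl (htSat_sat hXY hc))
        (fun hc => Or.inr (htSat_sat hXY hc)))
  | imp F G ihF ihG =>
    simp only [PForm.htSat, PForm.reduct, PForm.sat]
    by_cases h : PForm.sat Y F → PForm.sat Y G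
    · erw [@if_pos _ (Classical.propDecidable _) h]; simp only [PForm.sat]
      constructor
      · exact fun hc hr => ihG.mp (hc.1 (ihF.mpr hr))
      · exact fun hc => ⟨fun hh => ihG.mpr (hc (ihF.mp hh)), h⟩
    · erw [@if_neg _ (Classical.propDecidable _) h]; simp only [PForm.sat, iff_false]
      exact fun hc => h hc.2
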